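/- The utilitarian rule satisfies weak line-up enlargement monotonicity: if π is a utilitarian-winning line-up of election (S,C,P) and (S',C,P∪{p*}) extends it by one new position p* (with S' agreeing with S on P), then there exists a utilitarian-winning line-up π' of the extended election such that every candidate assigned in π is also assigned in π'. -/

import Mathlib

open Function

section Defs

variable {C P : Type*}

/-- Utilitarian (summed) score of a line-up. -/
def utilScore [Fintype P] (S : C → P → ℚ) (π : P → C) : ℚ := ∑ p, S (π p) p

/-- Winner under the utilitarian rule. -/
def IsUtilWinner [Fintype P] (S : C → P → ℚ) (π : P → C) : Prop :=
  Function.Injective π ∧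
    ∀ π' : P → C, Function.Injective π' → utilScore S π' ≤ utilScore S π

/-- Egalitarian (minimum) score of a line-up. -/
def egalScore [Fintype P] [Nonempty P] (S : C → P → ℚ) (π : P → C) : ℚ :=
  Finset.univ.inf' Finset.univ_nonempty (fun p => S (π p) p)

/-- Winner under the egalitarian rule. -/
def IsEgalWinner [Fintype P] [Nonempty P] (S : C → P → ℚ) (π : P → C) : Prop :=
  Function.Injective π ∧
    ∀ π' : P → C, Function.Injective π' → egalScore S π' ≤ egalScore S π

/-- Outcome of the sequential rule that fills positions in increasing order of the
priority `r`: each position receives a best candidate among those not assigned to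
an earlier position. -/
def FixedOrderOutcome (r : P → ℕ) (S : C → P → ℚ) (π : P → C) : Prop :=
  Function.Injective π ∧
    ∀ p : P, ∀ c : C, (∀ p' : P, r p' < r p → c ≠ π p') → S c p ≤ S (π p) p

/-- Outcome of some sequential rule: positions are filled one at a time in some order,
each receiving a best remaining candidate. -/
def SeqOutcome (S : C → P → ℚ) (π : P → C) : Prop :=
  ∃ r : P → ℕ, Function.Injective r ∧ FixedOrderOutcome r S π

/-- Outcome of the max-first rule along the order `r`: at each step the assigned
candidate-position pair has maximal score among all remaining pairs. -/
def MaxFirstOrder (r : P → ℕ) (S : C → P → ℚ) (π : P → C) : Prop :=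
  Function.Injective π ∧
    ∀ p p'' : P, r p ≤ r p'' → ∀ c : C,
      (∀ p' : P, r p' < r p → c ≠ π p') → S c p'' ≤ S (π p) p

/-- Outcome of the max-first sequential rule. -/
def MaxFirstOutcome (S : C → P → ℚ) (π : P → C) : Prop :=
  ∃ r : P → ℕ, Function.Injective r ∧ MaxFirstOrder r S π

/-- Outcome of the min-first rule along the order `r`: at each step the filled
position is one whose best remaining candidate score is smallest among the remaining
positions, and it receives a best remaining candidate. -/
def MinFirstOrder (r : P → ℕ) (S : C → P → ℚ) (π : P → C) : Prop :=
  Function.Injective π ∧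
    (∀ p : P, ∀ c : C, (∀ p' : P, r p' < r p → c ≠ π p') → S c p ≤ S (π p) p) ∧
    (∀ p p'' : P, r p ≤ r p'' →
      ∃ c : C, (∀ p' : P, r p' < r p → c ≠ π p') ∧ S (π p) p ≤ S c p'')

/-- Outcome of the min-first sequential rule. -/
def MinFirstOutcome (S : C → P → ℚ) (π : P → C) : Prop :=
  ∃ r : P → ℕ, Function.Injective r ∧ MinFirstOrder r S π

/-- A line-up is reasonably satisfying if (i) there are no two positions `p, p'` with
`score_p(π_{p'}) > score_p(π_p)` and `score_p(π_{p'}) > score_{p'}(π_{p'})`, and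
(ii) no unassigned candidate scores higher on some position than its occupant. -/
def ReasonablySatisfying (S : C → P → ℚ) (π : P → C) : Prop :=
  (¬ ∃ p p' : P, S (π p') p > S (π p) p ∧ S (π p') p > S (π p') p') ∧
  (¬ ∃ (c : C) (p : P), c ∉ Set.range π ∧ S c p > S (π p) p)

/-- A line-up is score Pareto optimal if no line-up is at least as good on every
position and strictly better on some position. -/
def ScoreParetoOptimal (S : C → P → ℚ) (π : P → C) : Prop :=
  ¬ ∃ π' : P → C, Function.Injective π' ∧
      (∀ p : P, S (π p) p ≤ S (π' p) p) ∧ (∃ p : P, S (π p) p < S (π' p) p)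

/-- The entries of `v` sorted in decreasing order; `sortedDesc v i` is the
`(i+1)`-st largest entry of `v`. -/
def sortedDesc {n : ℕ} (v : Fin n → ℚ) : Fin n → ℚ :=
  v ∘ (Tuple.sort (fun i => -v i))

/-- Ordered weighted average of `v` with OWA-vector `Λ`. -/
def owa {n : ℕ} (Λ : Fin n → ℚ) (v : Fin n → ℚ) : ℚ :=
  ∑ i, Λ i * sortedDesc v i

/-- The score vector of a line-up. -/
def scoreVec {q : ℕ} (S : C → Fin q → ℚ) (π : Fin q → C) : Fin q → ℚ :=
  fun p => S (π p) p

/-- Winner under the OWA-rule `f^Λ`. -/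
def IsOWAWinner {q : ℕ} (Λ : Fin q → ℚ) (S : C → Fin q → ℚ) (π : Fin q → C) : Prop :=
  Function.Injective π ∧
    ∀ π' : Fin q → C, Function.Injective π' →
      owa Λ (scoreVec S π') ≤ owa Λ (scoreVec S π)

end Defs

lemma stmt9_step {C P : Type*} [Fintype C] [Fintype P] [DecidableEq C] (S : C → P → ℚ)
    (S' : C → Option P → ℚ) (hagree : ∀ c p, S' c (some p) = S c p)
    (π : P → C) (h : IsUtilWinner S π)
    (σ : Option P → C) (hσ : IsUtilWinner S' σ)
    (p0 : P) (ha : π p0 ∉ Set.range σ) :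
    ∃ τ : Option P → C, IsUtilWinner S' τ ∧
      (Finset.univ.image π \ Finset.univ.image τ) ⊂
        (Finset.univ.image π \ Finset.univ.image σ) := by
  classical
  obtain ⟨hπinj, hπmax⟩ := h
  obtain ⟨hσinj, hσmax⟩ := hσ
  set a := π p0 with hadef
  set g : C → C := fun x => if hx : ∃ p, π p = x then σ (some hx.choose) else x with hg
  have hgπ : ∀ p, g (π p) = σ (some p) := by
    intro p
    have hx : ∃ p', π p' = π p := ⟨p, rfl⟩
    have hch : hx.choose = p := hπinj hx.choose_spec
    simp only [hg, dif_pos hx, hch]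
  have hginj : ∀ p p' : P, g (π p) = g (π p') → p = p' := by
    intro p p' hpp'
    rw [hgπ, hgπ] at hpp'
    exact Option.some_injective _ (hσinj hpp')
  set c : ℕ → C := fun i => g^[i] a with hcdef
  have hc0 : c 0 = a := rfl
  have hcsucc : ∀ i, c (i + 1) = g (c i) := by
    intro i; simp [hcdef, Function.iterate_succ_apply']
  have hrange : ∀ i, c i ∈ Set.range π → c (i + 1) ∈ Set.range σ := by
    rintro i ⟨p, hp⟩
    rw [hcsucc, ← hp, hgπ]; exact ⟨some p, rfl⟩
  have hdist : ∀ i d, (∀ m, m < i + d + 1 → c m ∈ Set.range π) → c i ≠ c (i + d + 1) := by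
    intro i
    induction i with
    | zero =>
      intro d hm heq
      have h1 : c (0 + d + 1) ∈ Set.range σ := by
        have := hrange d (hm d (by omega))
        simpa [Nat.add_comm] using this
      rw [← heq, hc0] at h1
      exact ha h1
    | succ i ih =>
      intro d hm heq
      have h1 : c (i + 1) = g (c i) := hcsucc i
      have h2 : c (i + 1 + d + 1) = g (c (i + d + 1)) := by
        have := hcsucc (i + d + 1); convert this using 2; omega
      obtain ⟨p, hp⟩ := hm i (by omega)
      obtain ⟨p', hp'⟩ := hm (i + d + 1) (by omega)
      rw [h1, h2, ← hp, ← hp'] at heq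
      have := hginj _ _ heq
      apply ih d (fun m hmlt => hm m (by omega))
      rw [← hp, ← hp', this]
  have hex : ∃ i, c i ∉ Set.range π := by
    by_contra hall
    push_neg at hall
    obtain ⟨x, y, hxy, hcxy⟩ := Finite.exists_ne_map_eq_of_infinite c
    rcases Nat.lt_or_ge x y with hlt | hge
    · obtain ⟨d, hd⟩ : ∃ d, y = x + d + 1 := ⟨y - x - 1, by omega⟩
      exact hdist x d (fun m _ => hall m) (by rw [← hd]; exact hcxy)
    · have hlt : y < x := by omega
      obtain ⟨d, hd⟩ : ∃ d, x = y + d + 1 := ⟨x - y - 1, by omega⟩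
      exact hdist y d (fun m _ => hall m) (by rw [← hd]; exact hcxy.symm)
  set k := Nat.find hex with hkdef
  have hck : c k ∉ Set.range π := Nat.find_spec hex
  have hcm : ∀ m, m < k → c m ∈ Set.range π := by
    intro m hm
    by_contra hmem
    exact absurd hm (not_lt.mpr (Nat.find_le hmem))
  have hkpos : 0 < k := by
    rcases Nat.eq_zero_or_pos k with h0 | h0
    · exfalso; apply hck; rw [h0, hc0]; exact ⟨p0, rfl⟩
    · exact h0
  set O : Finset C := (Finset.range k).image c with hO
  have hmemO : ∀ x, x ∈ O ↔ ∃ i < k, c i = x := by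
    intro x; simp [hO]
  have haO : a ∈ O := (hmemO a).mpr ⟨0, hkpos, hc0⟩
  have hOA : ∀ x ∈ O, x ∈ Set.range π := by
    intro x hx
    obtain ⟨i, hi, hci⟩ := (hmemO x).mp hx
    rw [← hci]; exact hcm i hi
  -- if σ q lands in O then q = some p with π p ∈ O
  have hσO : ∀ q : Option P, σ q ∈ O → ∃ p : P, q = some p ∧ π p ∈ O := by
    intro q hq
    obtain ⟨j, hj, hcj⟩ := (hmemO (σ q)).mp hq
    rcases Nat.eq_zero_or_pos j with h0 | h0
    · exfalso; apply ha; rw [h0, hc0] at hcj; exact ⟨q, hcj.symm⟩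
    · obtain ⟨i, rfl⟩ : ∃ i, j = i + 1 := ⟨j - 1, by omega⟩
      obtain ⟨p, hp⟩ := hcm i (by omega)
      have : c (i + 1) = σ (some p) := by rw [hcsucc, ← hp, hgπ]
      rw [this] at hcj
      have hq' : q = some p := hσinj hcj.symm
      exact ⟨p, hq', by rw [hp]; exact (hmemO _).mpr ⟨i, by omega, rfl⟩⟩
  -- where σ maps positions whose π-value is in O
  have hgO : ∀ p : P, π p ∈ O → (σ (some p) ∈ O ∨ σ (some p) ∉ Set.range π) := by
    intro p hp
    obtain ⟨i, hi, hci⟩ := (hmemO (π p)).mp hp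
    have hσp : σ (some p) = c (i + 1) := by rw [hcsucc, hci, hgπ]
    rcases Nat.lt_or_ge (i + 1) k with hlt | hge
    · left; rw [hσp]; exact (hmemO _).mpr ⟨i + 1, hlt, rfl⟩
    · right
      have : i + 1 = k := by omega
      rw [hσp, this]; exact hck
  set τ : Option P → C := fun q =>
    Option.elim q (σ none) (fun p => if π p ∈ O then π p else σ (some p)) with hτ
  have hτnone : τ none = σ none := rfl
  have hτsome : ∀ p, τ (some p) = if π p ∈ O then π p else σ (some p) := fun p => rfl
  have hτinj : Function.Injective τ := by
    intro q q' hqq'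
    rcases q with _ | p <;> rcases q' with _ | p'
    · rfl
    · 
      exfalso
      rw [hτnone, hτsome] at hqq'
      by_cases hp' : π p' ∈ O
      · rw [if_pos hp'] at hqq'
        have : σ none ∈ O := by rw [hqq']; exact hp'
        obtain ⟨p'', hp'', _⟩ := hσO none this
        exact nomatch hp''
      · rw [if_neg hp'] at hqq'
        exact nomatch (hσinj hqq')
    · 
      exfalso
      rw [hτnone, hτsome] at hqq'
      by_cases hp : π p ∈ O
      · rw [if_pos hp] at hqq'
        have : σ none ∈ O := by rw [← hqq']; exact hp
        obtain ⟨p'', hp'', _⟩ := hσO none this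
        exact nomatch hp''
      · rw [if_neg hp] at hqq'
        exact nomatch (hσinj hqq')
    · 
      rw [hτsome, hτsome] at hqq'
      by_cases hp : π p ∈ O <;> by_cases hp' : π p' ∈ O
      · rw [if_pos hp, if_pos hp'] at hqq'
        exact congrArg some (hπinj hqq')
      · rw [if_pos hp, if_neg hp'] at hqq'
        have : σ (some p') ∈ O := by rw [← hqq']; exact hp
        obtain ⟨p'', hp'', hπp''⟩ := hσO _ this
        rw [show p'' = p' from (Option.some_injective _ hp'').symm] at hπp''
        exact absurd hπp'' hp'
      · rw [if_neg hp, if_pos hp'] at hqq'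
        have : σ (some p) ∈ O := by rw [hqq']; exact hp'
        obtain ⟨p'', hp'', hπp''⟩ := hσO _ this
        rw [show p'' = p from (Option.some_injective _ hp'').symm] at hπp''
        exact absurd hπp'' hp
      · rw [if_neg hp, if_neg hp'] at hqq'
        exact hσinj hqq'
  set ρ : P → C := fun p => if π p ∈ O then σ (some p) else π p with hρ
  have hρinj : Function.Injective ρ := by
    intro p p' hpp'
    simp only [hρ] at hpp'
    by_cases hp : π p ∈ O <;> by_cases hp' : π p' ∈ O
    · rw [if_pos hp, if_pos hp'] at hpp'
      exact Option.some_injective _ (hσinj hpp')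
    · rw [if_pos hp, if_neg hp'] at hpp'
      rcases hgO p hp with hin | hout
      · rw [hpp'] at hin; exact absurd hin hp'
      · rw [hpp'] at hout; exact absurd ⟨p', rfl⟩ hout
    · rw [if_neg hp, if_pos hp'] at hpp'
      rcases hgO p' hp' with hin | hout
      · rw [← hpp'] at hin; exact absurd hin hp
      · rw [← hpp'] at hout; exact absurd ⟨p, rfl⟩ hout
    · rw [if_neg hp, if_neg hp'] at hpp'
      exact hπinj hpp'
  -- score identity
  have hscore : utilScore S' σ + (utilScore S π - utilScore S ρ) = utilScore S' τ := by
    have hsplit : ∀ μ : Option P → C,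
        utilScore S' μ = S' (μ none) none + ∑ p : P, S (μ (some p)) p := by
      intro μ
      rw [utilScore, Fintype.sum_option]
      congr 1
      exact Finset.sum_congr rfl (fun p _ => hagree _ _)
    rw [hsplit σ, hsplit τ, hτnone, utilScore, utilScore]
    have : ∑ p : P, S (τ (some p)) p
        = ∑ p : P, S (σ (some p)) p + (∑ p : P, S (π p) p - ∑ p : P, S (ρ p) p) := by
      rw [← Finset.sum_sub_distrib, ← Finset.sum_add_distrib]
      apply Finset.sum_congr rfl
      intro p _
      rw [hτsome]
      simp only [hρ]
      by_cases hp : π p ∈ O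
      · rw [if_pos hp, if_pos hp]; ring
      · rw [if_neg hp, if_neg hp]; ring
    rw [this]; ring
  have hρle : utilScore S ρ ≤ utilScore S π := hπmax ρ hρinj
  have hστ : utilScore S' σ ≤ utilScore S' τ := by
    rw [← hscore]; linarith
  have hτwin : IsUtilWinner S' τ :=
    ⟨hτinj, fun μ hμ => le_trans (hσmax μ hμ) hστ⟩
  refine ⟨τ, hτwin, ?_⟩
  have hτO : ∀ x ∈ O, x ∈ Set.range τ := by
    intro x hx
    obtain ⟨p, hp⟩ := hOA x hx
    refine ⟨some p, ?_⟩
    rw [hτsome, if_pos (by rw [hp]; exact hx), hp]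
  have hkeep : ∀ q : Option P, σ q ∈ Set.range π → σ q ∈ Set.range τ := by
    intro q hq
    by_cases hqO : σ q ∈ O
    · exact hτO _ hqO
    · match q with
      | none => exact ⟨none, rfl⟩
      | some p =>
        by_cases hp : π p ∈ O
        · rcases hgO p hp with hin | hout
          · exact absurd hin hqO
          · exact absurd hq hout
        · exact ⟨some p, by rw [hτsome, if_neg hp]⟩
  have hsub : (Finset.univ.image π \ Finset.univ.image τ) ⊆
      (Finset.univ.image π \ Finset.univ.image σ) := by
    intro x hx
    rw [Finset.mem_sdiff] at hx ⊢
    refine ⟨hx.1, fun hmem => hx.2 ?_⟩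
    obtain ⟨q, _, hq⟩ := Finset.mem_image.mp hmem
    obtain ⟨p, _, hp⟩ := Finset.mem_image.mp hx.1
    have : σ q ∈ Set.range π := ⟨p, by rw [hp, hq]⟩
    obtain ⟨q', hq'⟩ := hkeep q this
    exact Finset.mem_image.mpr ⟨q', Finset.mem_univ _, by rw [hq', hq]⟩
  rw [Finset.ssubset_iff_of_subset hsub]
  refine ⟨a, ?_, ?_⟩
  · rw [Finset.mem_sdiff]
    constructor
    · exact Finset.mem_image.mpr ⟨p0, Finset.mem_univ _, rfl⟩
    · intro hmem
      obtain ⟨q, _, hq⟩ := Finset.mem_image.mp hmem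
      exact ha ⟨q, hq⟩
  · rw [Finset.mem_sdiff]
    intro hmem
    obtain ⟨q, hq⟩ := hτO a haO
    exact hmem.2 (Finset.mem_image.mpr ⟨q, Finset.mem_univ _, hq⟩)


/-- The utilitarian rule satisfies weak line-up enlargement monotonicity. -/
theorem stmt9 {C P : Type*} [Fintype C] [Fintype P] (S : C → P → ℚ)
    (S' : C → Option P → ℚ) (hagree : ∀ c p, S' c (some p) = S c p)
    (hcard : Fintype.card P + 1 ≤ Fintype.card C)
    (π : P → C) (h : IsUtilWinner S π) :
    ∃ π' : Option P → C, IsUtilWinner S' π' ∧ Set.range π ⊆ Set.range π' := by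
  classical
  -- a winner of the extended election exists
  have hcard' : Fintype.card (Option P) ≤ Fintype.card C := by
    simpa [Fintype.card_option] using hcard
  obtain ⟨f⟩ : Nonempty (Option P ↪ C) := Function.Embedding.nonempty_of_card_le hcard'
  set G : Finset (Option P → C) := Finset.univ.filter (fun σ => Function.Injective σ) with hG
  have hGne : G.Nonempty := ⟨f, by simp [hG]; exact f.injective⟩
  obtain ⟨σ0, hσ0G, hσ0max⟩ := G.exists_max_image (fun σ => utilScore S' σ) hGne
  have hσ0win : IsUtilWinner S' σ0 := by
    refine ⟨(Finset.mem_filter.mp hσ0G).2, fun μ hμ => ?_⟩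
    exact hσ0max μ (Finset.mem_filter.mpr ⟨Finset.mem_univ _, hμ⟩)
  -- induction on the size of the deficiency
  have main : ∀ n (σ : Option P → C), IsUtilWinner S' σ →
      (Finset.univ.image π \ Finset.univ.image σ).card ≤ n →
      ∃ τ : Option P → C, IsUtilWinner S' τ ∧ Set.range π ⊆ Set.range τ := by
    intro n
    induction n with
    | zero =>
      intro σ hσ hcard0
      refine ⟨σ, hσ, ?_⟩
      rintro x ⟨p, hp⟩
      have hempty : (Finset.univ.image π \ Finset.univ.image σ) = ∅ :=
        Finset.card_eq_zero.mp (Nat.le_zero.mp hcard0)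
      by_contra hx
      have : x ∈ Finset.univ.image π \ Finset.univ.image σ := by
        rw [Finset.mem_sdiff]
        refine ⟨Finset.mem_image.mpr ⟨p, Finset.mem_univ _, hp⟩, fun hmem => ?_⟩
        obtain ⟨q, _, hq⟩ := Finset.mem_image.mp hmem
        exact hx ⟨q, hq⟩
      rw [hempty] at this
      exact absurd this (Finset.notMem_empty x)
    | succ n ih =>
      intro σ hσ hcardn
      by_cases h0 : (Finset.univ.image π \ Finset.univ.image σ) = ∅
      · exact ih σ hσ (by rw [h0]; simp)
      · obtain ⟨x, hx⟩ := Finset.nonempty_of_ne_empty h0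
        rw [Finset.mem_sdiff] at hx
        obtain ⟨p0, _, hp0⟩ := Finset.mem_image.mp hx.1
        have ha : π p0 ∉ Set.range σ := by
          rintro ⟨q, hq⟩
          exact hx.2 (Finset.mem_image.mpr ⟨q, Finset.mem_univ _, by rw [hq, hp0]⟩)
        obtain ⟨τ, hτwin, hτlt⟩ := stmt9_step S S' hagree π h σ hσ p0 ha
        exact ih τ hτwin (by
          have := Finset.card_lt_card hτlt
          omega)
  exact main _ σ0 hσ0win le_rfl
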